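/- For every real L ≥ 0 and every real number γ there exist θ ∈ (π/2, π), κ > 0, τ* > 0 and a constant C > 0 such that for every τ ∈ (0, τ*], every complex number w with |w| ≤ L, and every z on the contour Γ^τ_{θ,κ}, one has |(z+w)^γ − ((1 − e^{−τ(z+w)})/τ)^γ| ≤ C τ |z|^{γ+1}, where complex powers are taken with the principal branch. -/

import Mathlib

open Real Complex

lemma aux_jordan {v : ℂ} (hre : 0 ≤ v.re) :
    |v.arg| ≤ π / 2 * (|v.im| / ‖v‖) := by
  have hpi := Real.pi_pos
  have h1 : |v.arg| ≤ π / 2 := Complex.abs_arg_le_pi_div_two_iff.mpr hre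
  have h2 : 2 / π * |v.arg| ≤ Real.sin |v.arg| := Real.mul_le_sin (abs_nonneg _) h1
  have h3 : Real.sin |v.arg| = |Real.sin v.arg| := by
    rcases le_or_gt 0 v.arg with h | h
    · rw [_root_.abs_of_nonneg h, _root_.abs_of_nonneg
        (Real.sin_nonneg_of_nonneg_of_le_pi h (by linarith [(_root_.abs_of_nonneg h) ▸ h1]))]
    · rw [_root_.abs_of_neg h, Real.sin_neg, _root_.abs_of_nonpos
        (Real.sin_nonpos_of_nonpos_of_neg_pi_le h.le (by nlinarith [(_root_.abs_of_neg h) ▸ h1]))]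
  have h4 : |Real.sin v.arg| = |v.im| / ‖v‖ := by
    rw [Complex.sin_arg, abs_div, _root_.abs_of_nonneg (norm_nonneg v)]
  rw [h3, h4] at h2
  calc |v.arg| = π / 2 * (2 / π * |v.arg|) := by field_simp
    _ ≤ π / 2 * (|v.im| / ‖v‖) := by
        exact mul_le_mul_of_nonneg_left h2 (by positivity)

lemma aux_re_ge {b : ℂ} {ε : ℝ} (h : ‖b - 1‖ ≤ ε) : 1 - ε ≤ b.re := by
  have h1 : |(b - 1).re| ≤ ε := le_trans (Complex.abs_re_le_norm _) h
  have h2 : (b - 1).re = b.re - 1 := by simp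
  rw [h2] at h1
  cases' abs_le.mp h1 with h3 h4
  linarith

lemma aux_abs_ge {b : ℂ} {ε : ℝ} (h : ‖b - 1‖ ≤ ε) : 1 - ε ≤ ‖b‖ := by
  have h0 : |‖b‖ - ‖(1:ℂ)‖| ≤ ‖b - 1‖ :=
    abs_norm_sub_norm_le b 1
  simp only [norm_one] at h0
  have h2 := abs_le.mp (le_trans h0 h)
  linarith [h2.1]

lemma aux_abs_le {b : ℂ} {ε : ℝ} (h : ‖b - 1‖ ≤ ε) : ‖b‖ ≤ 1 + ε := by
  calc ‖b‖ = ‖b - 1 + 1‖ := by ring_nf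
    _ ≤ ‖b - 1‖ + ‖(1:ℂ)‖ := norm_add_le _ _
    _ ≤ ε + 1 := by simp [h]
    _ = 1 + ε := by ring

lemma aux_arg_near_one {b : ℂ} (h : ‖b - 1‖ ≤ 1/4) :
    |b.arg| ≤ π / 2 * ((4:ℝ)/3) * ‖b - 1‖ := by
  have hb3 : (3:ℝ)/4 ≤ ‖b‖ := by have := aux_abs_ge h; linarith
  have hre : 0 ≤ b.re := by have := aux_re_ge h; linarith
  have him : |b.im| ≤ ‖b - 1‖ := by
    have h2 : b.im = (b - 1).im := by simp
    rw [h2]; exact Complex.abs_im_le_norm _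
  calc |b.arg| ≤ π / 2 * (|b.im| / ‖b‖) := aux_jordan hre
    _ ≤ π / 2 * (‖b - 1‖ / (3/4)) := by
        apply mul_le_mul_of_nonneg_left _ (by positivity)
        exact div_le_div₀ (norm_nonneg _) him (by norm_num) hb3
    _ = π / 2 * ((4:ℝ)/3) * ‖b - 1‖ := by ring

lemma aux_log_near_one {b : ℂ} (h : ‖b - 1‖ ≤ 1/4) :
    ‖Complex.log b‖ ≤ 5 * ‖b - 1‖ := by
  have hb3 : (3:ℝ)/4 ≤ ‖b‖ := by have := aux_abs_ge h; linarith
  have hb5 : ‖b‖ ≤ 5/4 := by have := aux_abs_le h; linarith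
  have habs1 : |‖b‖ - 1| ≤ ‖b - 1‖ := by
    have h0 : |‖b‖ - ‖(1:ℂ)‖| ≤ ‖b - 1‖ :=
      abs_norm_sub_norm_le b 1
    simpa using h0
  have hlog : |Real.log (‖b‖)| ≤ 2 * ‖b - 1‖ := by
    rcases le_or_gt 1 (‖b‖) with h1 | h1
    · rw [_root_.abs_of_nonneg (Real.log_nonneg h1)]
      have := Real.log_le_sub_one_of_pos (show (0:ℝ) < ‖b‖ by linarith)
      have h2 : ‖b‖ - 1 ≤ ‖b - 1‖ := by
        cases' abs_le.mp habs1 with _ hr; linarith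
      linarith [norm_nonneg (b-1)]
    · rw [_root_.abs_of_nonpos (Real.log_nonpos (by linarith) h1.le)]
      have hpos : (0:ℝ) < ‖b‖ := by linarith
      have := Real.log_le_sub_one_of_pos (show (0:ℝ) < (‖b‖)⁻¹ by positivity)
      rw [Real.log_inv] at this
      have h2 : (‖b‖)⁻¹ - 1 = (1 - ‖b‖) / ‖b‖ := by
        field_simp
      have h3 : (1 - ‖b‖) / ‖b‖ ≤ (1 - ‖b‖) / (3/4) := by
        apply div_le_div_of_nonneg_left _ (by norm_num) hb3; linarith
      have h4 : 1 - ‖b‖ ≤ ‖b - 1‖ := by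
        cases' abs_le.mp habs1 with hl _; linarith
      rw [h2] at this
      linarith
  have harg : |b.arg| ≤ 3 * ‖b - 1‖ := by
    have := aux_arg_near_one h
    have hpi4 : π ≤ 4 := Real.pi_le_four
    nlinarith [norm_nonneg (b - 1), Real.pi_pos]
  calc ‖Complex.log b‖ ≤ |(Complex.log b).re| + |(Complex.log b).im| :=
        Complex.norm_le_abs_re_add_abs_im _
    _ = |Real.log (‖b‖)| + |b.arg| := by rw [Complex.log_re, Complex.log_im]
    _ ≤ 5 * ‖b - 1‖ := by linarith

lemma aux_rpow_ratio {x t γ : ℝ} (hx : 0 < x) (h1 : x / 2 ≤ t) (h2 : t ≤ 2 * x) :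
    t ^ γ ≤ 2 ^ |γ| * x ^ γ := by
  have ht : 0 < t := by linarith
  rcases le_or_gt 0 γ with hγ | hγ
  · rw [_root_.abs_of_nonneg hγ]
    calc t ^ γ ≤ (2 * x) ^ γ := Real.rpow_le_rpow ht.le h2 hγ
      _ = 2 ^ γ * x ^ γ := Real.mul_rpow (by norm_num) hx.le
  · rw [_root_.abs_of_neg hγ]
    calc t ^ γ ≤ (x / 2) ^ γ := Real.rpow_le_rpow_of_nonpos (by linarith) h1 hγ.le
      _ = x ^ γ / 2 ^ γ := Real.div_rpow hx.le (by norm_num : (0:ℝ) ≤ 2) γ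
      _ = 2 ^ (-γ) * x ^ γ := by
          rw [Real.rpow_neg (by norm_num)]; field_simp

lemma aux_rpow_between {m t M γ : ℝ} (hm : 0 < m) (h1 : m ≤ t) (h2 : t ≤ M) :
    t ^ γ ≤ m ^ γ + M ^ γ := by
  rcases le_or_gt 0 γ with hγ | hγ
  · have := Real.rpow_le_rpow (by linarith) h2 hγ
    have hm' : (0:ℝ) ≤ m ^ γ := Real.rpow_nonneg hm.le γ
    linarith
  · have := Real.rpow_le_rpow_of_nonpos hm h1 hγ.le
    have hM' : (0:ℝ) ≤ M ^ γ := Real.rpow_nonneg (by linarith) γ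
    linarith

lemma aux_exp_lb {u : ℂ} {r : ℝ} (hr0 : 0 < r) (hr : r ≤ 1/2) (h1 : r ≤ ‖u‖)
    (h2 : |u.im| ≤ 3 * π / 2) : r / 8 ≤ ‖1 - Complex.exp (-u)‖ := by
  have hpi := Real.pi_gt_three
  have hexp_re : (Complex.exp (-u)).re = Real.exp (-u.re) * Real.cos u.im := by
    rw [Complex.exp_re]; simp
  have hexp_im : (Complex.exp (-u)).im = -(Real.exp (-u.re) * Real.sin u.im) := by
    rw [Complex.exp_im]; simp [Real.sin_neg]
  have habs_exp : ‖Complex.exp (-u)‖ = Real.exp (-u.re) := by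
    rw [Complex.norm_exp]; simp
  rcases le_or_gt (π/2) |u.im| with hy | hy
  · have hcos : Real.cos u.im ≤ 0 := by
      rw [← Real.cos_abs]
      exact Real.cos_nonpos_of_pi_div_two_le_of_le hy (by linarith)
    have hre1 : (1:ℝ) ≤ (1 - Complex.exp (-u)).re := by
      simp only [Complex.sub_re, Complex.one_re, hexp_re]
      nlinarith [Real.exp_pos (-u.re)]
    calc r / 8 ≤ 1 := by linarith
      _ ≤ |(1 - Complex.exp (-u)).re| := by
          rw [_root_.abs_of_nonneg (by linarith)]; exact hre1
      _ ≤ ‖1 - Complex.exp (-u)‖ := Complex.abs_re_le_norm _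
  · rcases le_or_gt (r/2) u.re with hx | hx
    · have he : Real.exp (-u.re) ≤ 1 - r/4 := by
        have e1 : Real.exp (-u.re) ≤ Real.exp (-(r/2)) := by
          apply Real.exp_le_exp.mpr; linarith
        have e2 : Real.exp (-(r/2)) ≤ 1 - r/4 := by
          rw [Real.exp_neg]
          have a1 : 1 + r/2 ≤ Real.exp (r/2) := by linarith [Real.add_one_le_exp (r/2)]
          have a2 : (Real.exp (r/2))⁻¹ ≤ (1 + r/2)⁻¹ :=
            inv_anti₀ (by linarith) a1
          have a3 : (1 + r/2)⁻¹ ≤ 1 - r/4 := by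
            rw [← one_div, div_le_iff₀ (by linarith)]
            nlinarith
          linarith
        linarith
      have hsub : |1 - Real.exp (-u.re)| ≤ ‖1 - Complex.exp (-u)‖ := by
        have h0 : |‖(1:ℂ)‖ - ‖Complex.exp (-u)‖|
            ≤ ‖1 - Complex.exp (-u)‖ :=
          abs_norm_sub_norm_le 1 (Complex.exp (-u))
        simpa [habs_exp] using h0
      calc r / 8 ≤ 1 - Real.exp (-u.re) := by linarith
        _ ≤ |1 - Real.exp (-u.re)| := le_abs_self _
        _ ≤ ‖1 - Complex.exp (-u)‖ := hsub
    · rcases le_or_gt u.re (-(r/2)) with hx2 | hx2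
      · have he : 1 + r/2 ≤ Real.exp (-u.re) := by
          have := Real.add_one_le_exp (-u.re)
          linarith
        have hsub : |1 - Real.exp (-u.re)| ≤ ‖1 - Complex.exp (-u)‖ := by
          have h0 : |‖(1:ℂ)‖ - ‖Complex.exp (-u)‖|
              ≤ ‖1 - Complex.exp (-u)‖ :=
            abs_norm_sub_norm_le 1 (Complex.exp (-u))
          simpa [habs_exp] using h0
        calc r / 8 ≤ Real.exp (-u.re) - 1 := by linarith
          _ ≤ |1 - Real.exp (-u.re)| := by rw [abs_sub_comm]; exact le_abs_self _
          _ ≤ ‖1 - Complex.exp (-u)‖ := hsub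
      · have hyr : r / 2 ≤ |u.im| := by
          have habs2 : ‖u‖ ≤ |u.re| + |u.im| := Complex.norm_le_abs_re_add_abs_im u
          have hre : |u.re| ≤ r / 2 := abs_le.mpr ⟨by linarith, by linarith⟩
          linarith
        have hsin : 2 / π * |u.im| ≤ |Real.sin u.im| := by
          have hs : 2 / π * |u.im| ≤ Real.sin |u.im| := Real.mul_le_sin (abs_nonneg _) hy.le
          have hs2 : Real.sin |u.im| ≤ |Real.sin u.im| := by
            rcases le_or_gt 0 u.im with h | h
            · rw [_root_.abs_of_nonneg h]; exact le_abs_self _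
            · rw [_root_.abs_of_neg h, Real.sin_neg]; exact neg_le_abs _
          linarith
        have hexneg : 1 - r/2 ≤ Real.exp (-u.re) := by
          have := Real.add_one_le_exp (-u.re)
          linarith
        have him : |(1 - Complex.exp (-u)).im| = Real.exp (-u.re) * |Real.sin u.im| := by
          simp only [Complex.sub_im, Complex.one_im, hexp_im, zero_sub, neg_neg, abs_mul,
            _root_.abs_of_nonneg (Real.exp_pos (-u.re)).le]
        have hq : (1:ℝ)/2 ≤ 2 / π := by
          rw [div_le_div_iff₀ (by norm_num) Real.pi_pos]
          linarith [Real.pi_le_four]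
        have p1 : r/4 ≤ 2 / π * (r/2) := by
          have := mul_le_mul_of_nonneg_right hq (by linarith : (0:ℝ) ≤ r/2)
          linarith
        have p2 : (3:ℝ)/4 ≤ 1 - r/2 := by linarith
        have p3 : (3:ℝ)/4 * (r/4) ≤ (1 - r/2) * (2 / π * (r/2)) :=
          mul_le_mul p2 p1 (by linarith) (by linarith)
        calc r / 8 ≤ (1 - r/2) * (2 / π * (r/2)) := by linarith
          _ ≤ Real.exp (-u.re) * |Real.sin u.im| := by
              apply mul_le_mul hexneg _ (by positivity) (by positivity)
              calc 2 / π * (r/2) ≤ 2 / π * |u.im| := by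
                    apply mul_le_mul_of_nonneg_left hyr (by positivity)
                _ ≤ |Real.sin u.im| := hsin
          _ = |(1 - Complex.exp (-u)).im| := him.symm
          _ ≤ ‖1 - Complex.exp (-u)‖ := Complex.abs_im_le_norm _

set_option maxHeartbeats 2000000 in
/-- Lemma 3.1(3): first-order symbol approximation estimate. For every L ≥ 0 and
γ ∈ ℝ there exist θ ∈ (π/2, π), κ > 0, τ* > 0 and C > 0 such that for
τ ∈ (0, τ*], |w| ≤ L and z on the contour Γ^τ_{θ,κ},
|(z+w)^γ − ((1 − e^{−τ(z+w)})/τ)^γ| ≤ C τ |z|^{γ+1}. -/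
theorem stmt_12 (L γ : ℝ) (hL : 0 ≤ L) :
    ∃ θ ∈ Set.Ioo (Real.pi / 2) Real.pi, ∃ κ > (0 : ℝ), ∃ τs > (0 : ℝ), ∃ C > (0 : ℝ),
      ∀ τ ∈ Set.Ioc (0 : ℝ) τs, ∀ w : ℂ, ‖w‖ ≤ L →
        ∀ z : ℂ,
          ((κ ≤ ‖z‖ ∧ ‖z‖ ≤ Real.pi / (τ * Real.sin θ) ∧ |z.arg| = θ)
            ∨ (‖z‖ = κ ∧ |z.arg| ≤ θ)) →
          ‖(z + w) ^ (γ : ℂ)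
              - (((1 - Complex.exp (-(τ : ℂ) * (z + w))) / (τ : ℂ)) ^ (γ : ℂ))‖
            ≤ C * τ * ‖z‖ ^ (γ + 1) := by
  have hpi := Real.pi_pos
  have hpi4 := Real.pi_le_four
  obtain ⟨δ, hδ0, hδ8, hδγ⟩ : ∃ δ : ℝ, 0 < δ ∧ δ ≤ 1/8 ∧ 6 * |γ| * δ ≤ 1 := by
    refine ⟨1 / (8 * (|γ| + 1)), by positivity, ?_, ?_⟩
    · rw [div_le_div_iff₀ (by positivity) (by norm_num)]
      nlinarith [abs_nonneg γ]
    · rw [mul_one_div, div_le_one (by positivity)]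
      nlinarith [abs_nonneg γ]
  obtain ⟨K, hK0, hKb⟩ : ∃ K : ℝ, 0 ≤ K ∧
      ∀ t : ℝ, δ/80 ≤ t → t ≤ 2 * (1 + Real.exp 5) / δ → t ^ γ ≤ K := by
    refine ⟨(δ/80) ^ γ + (2 * (1 + Real.exp 5) / δ) ^ γ, ?_, fun t h1 h2 => ?_⟩
    · have := Real.rpow_nonneg (show (0:ℝ) ≤ δ/80 by positivity) γ
      have := Real.rpow_nonneg (show (0:ℝ) ≤ 2 * (1 + Real.exp 5) / δ by positivity) γ
      linarith
    · exact aux_rpow_between (by positivity) h1 h2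
  have h2G : (0:ℝ) < 2 ^ |γ| := Real.rpow_pos_of_pos (by norm_num) |γ|
  obtain ⟨κ, hκ0, hκL⟩ : ∃ κ : ℝ, 0 < κ ∧ L ≤ κ / 8 := by
    refine ⟨8 * (L + 1), by positivity, by linarith⟩
  obtain ⟨τs, hτs0, hτsL, hτsκ⟩ : ∃ τs : ℝ, 0 < τs ∧ τs * L ≤ δ / 2 ∧ τs * κ ≤ δ / 2 := by
    refine ⟨δ / (2 * (κ + L + 1)), by positivity, ?_, ?_⟩
    · rw [div_mul_eq_mul_div, div_le_div_iff₀ (by positivity) (by norm_num)]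
      nlinarith
    · rw [div_mul_eq_mul_div, div_le_div_iff₀ (by positivity) (by norm_num)]
      nlinarith
  obtain ⟨C, hC0, hC1, hC2⟩ : ∃ C : ℝ, 0 < C ∧ 12 * 2 ^ |γ| * (|γ| + 1) ≤ C ∧
      2 ^ |γ| * (1 + K) / δ ≤ C := by
    have h1 : (0:ℝ) ≤ 12 * 2 ^ |γ| * (|γ| + 1) := by positivity
    have h2 : (0:ℝ) ≤ 2 ^ |γ| * (1 + K) / δ := by positivity
    exact ⟨12 * 2 ^ |γ| * (|γ| + 1) + 2 ^ |γ| * (1 + K) / δ + 1,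
      by linarith, by linarith, by linarith⟩
  -- θ facts
  have hθ1 : Real.pi / 2 < 3 * π / 5 := by linarith
  have hθ2 : 3 * π / 5 < π := by linarith
  have hsinθ : π / 4 ≤ Real.sin (3 * π / 5) := by
    have s1 : Real.sin (3 * π / 5) = Real.sin (2 * π / 5) := by
      rw [show 2 * π / 5 = π - 3 * π / 5 by ring, Real.sin_pi_sub]
    have s2 : Real.sin (π / 3) ≤ Real.sin (2 * π / 5) := by
      apply Real.sin_le_sin_of_le_of_le_pi_div_two (by linarith) (by linarith) (by linarith)
    rw [Real.sin_pi_div_three] at s2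
    have s3 := Real.sq_sqrt (by norm_num : (0:ℝ) ≤ 3)
    have s4 := Real.sqrt_nonneg 3
    have s5 := Real.pi_lt_d2
    nlinarith
  refine ⟨3 * π / 5, ⟨hθ1, hθ2⟩, κ, hκ0, τs, hτs0, C, hC0, ?_⟩
  rintro τ ⟨hτ0, hττs⟩ w hw z hz
  have hAκ : κ ≤ ‖z‖ := by
    rcases hz with ⟨h, _, _⟩ | ⟨h, _⟩
    · exact h
    · exact h.symm.le
  have hA0 : 0 < ‖z‖ := lt_of_lt_of_le hκ0 hAκ
  have hzne : z ≠ 0 := norm_pos_iff.mp hA0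
  have hwA : ‖w‖ ≤ ‖z‖ / 8 := by linarith
  have haA1 : 7 / 8 * ‖z‖ ≤ ‖z + w‖ := by
    have h0 : |‖z + w‖ - ‖z‖| ≤ ‖z + w - z‖ :=
      abs_norm_sub_norm_le (z + w) z
    rw [add_sub_cancel_left] at h0
    cases' abs_le.mp h0 with hl _
    linarith
  have haA2 : ‖z + w‖ ≤ 9 / 8 * ‖z‖ := by
    calc ‖z + w‖ ≤ ‖z‖ + ‖w‖ := norm_add_le _ _
      _ ≤ 9 / 8 * ‖z‖ := by linarith
  have hane : z + w ≠ 0 := by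
    intro h
    rw [h] at haA1
    simp at haA1
    linarith
  have harg_z : |z.arg| ≤ 3 * π / 5 := by
    rcases hz with ⟨_, _, h⟩ | ⟨_, h⟩
    · exact h.le
    · exact h
  have hτL : τ * L ≤ δ / 2 := by
    have := mul_le_mul_of_nonneg_right hττs hL
    linarith
  have hτκ : τ * κ ≤ δ / 2 := by
    have := mul_le_mul_of_nonneg_right hττs hκ0.le
    linarith
  have hτA4 : τ * ‖z‖ ≤ 4 := by
    rcases hz with ⟨_, h, _⟩ | ⟨h, _⟩
    · have hsin0 : (0:ℝ) < Real.sin (3 * π / 5) := by linarith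
      have h1 : ‖z‖ * (τ * Real.sin (3 * π / 5)) ≤ π :=
        (le_div_iff₀ (mul_pos hτ0 hsin0)).mp h
      have h2 : τ * ‖z‖ * (π / 4) ≤ ‖z‖ * (τ * Real.sin (3 * π / 5)) := by
        have h3 := mul_le_mul_of_nonneg_left hsinθ
          (mul_nonneg hτ0.le (norm_nonneg z))
        linarith [h3]
      by_contra hc
      push_neg at hc
      have h5 := mul_lt_mul_of_pos_right hc hpi
      linarith
    · rw [h]; linarith [hτκ, hδ8]
  -- the approximation factor b
  have hτne : (τ : ℂ) ≠ 0 := Complex.ofReal_ne_zero.mpr hτ0.ne'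
  set u : ℂ := (τ : ℂ) * (z + w) with hudef
  have hune : u ≠ 0 := mul_ne_zero hτne hane
  have habsu : ‖u‖ = τ * ‖z + w‖ := by
    rw [hudef, norm_mul, Complex.norm_real, Real.norm_eq_abs, _root_.abs_of_pos hτ0]
  set b : ℂ := (1 - Complex.exp (-u)) / u with hbdef
  have hgab : (1 - Complex.exp (-(τ : ℂ) * (z + w))) / (τ : ℂ) = (z + w) * b := by
    rw [hbdef, hudef]
    rw [show -(τ : ℂ) * (z + w) = -((τ : ℂ) * (z + w)) by ring]
    field_simp
  rw [hgab]
  have hA1 : ‖z‖ ^ (γ + 1) = ‖z‖ ^ γ * ‖z‖ :=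
    Real.rpow_add_one hA0.ne' γ
  have hrpow_a : (‖z + w‖) ^ γ ≤ 2 ^ |γ| * ‖z‖ ^ γ :=
    aux_rpow_ratio hA0 (by linarith) (by linarith)
  rcases le_or_gt (τ * ‖z‖) δ with hsmall | hlarge
  · -- SMALL CASE
    have habsu1 : ‖u‖ ≤ 9/8 * δ := by
      rw [habsu]
      have h6 := mul_le_mul_of_nonneg_left haA2 hτ0.le
      linarith
    have habsu2 : ‖u‖ ≤ 1 := by linarith [hδ8]
    have hb1 : ‖b - 1‖ ≤ ‖u‖ := by
      have hnum : ‖1 - Complex.exp (-u) - u‖ ≤ ‖u‖ ^ 2 := by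
        have h7 := Complex.norm_exp_sub_one_sub_id_le
          (show ‖-u‖ ≤ 1 by rwa [norm_neg])
        calc ‖1 - Complex.exp (-u) - u‖
            = ‖Complex.exp (-u) - 1 - -u‖ := by
              rw [← norm_neg (1 - Complex.exp (-u) - u)]; ring_nf
          _ ≤ ‖-u‖ ^ 2 := h7
          _ = ‖u‖ ^ 2 := by rw [norm_neg]
      have hb1' : b - 1 = (1 - Complex.exp (-u) - u) / u := by
        rw [hbdef]; field_simp
      rw [hb1', norm_div]
      rw [div_le_iff₀ (norm_pos_iff.mpr hune)]
      calc ‖1 - Complex.exp (-u) - u‖ ≤ ‖u‖ ^ 2 := hnum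
        _ = ‖u‖ * ‖u‖ := by ring
    have hb14 : ‖b - 1‖ ≤ 1/4 := by linarith
    have hbabs3 : (3:ℝ)/4 ≤ ‖b‖ := by have := aux_abs_ge hb14; linarith
    have hbne : b ≠ 0 := by
      intro h0; rw [h0] at hbabs3; simp at hbabs3; linarith
    have hc1 : ‖1 + w / z - 1‖ ≤ 1/8 := by
      have he : (1 : ℂ) + w / z - 1 = w / z := by ring
      rw [he, norm_div, div_le_iff₀ hA0]
      linarith
    have hcne : (1:ℂ) + w / z ≠ 0 := by
      intro h0
      have h01 := aux_abs_ge (le_trans hc1 (by norm_num : (1:ℝ)/8 ≤ 1/8))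
      rw [h0] at h01; simp at h01; linarith
    have hargc : |(1 + w / z).arg| ≤ π / 12 := by
      have h1 := aux_arg_near_one (le_trans hc1 (by norm_num))
      have h2 : π / 2 * ((4:ℝ)/3) * ‖1 + w / z - 1‖ ≤ π / 2 * ((4:ℝ)/3) * (1/8) :=
        mul_le_mul_of_nonneg_left hc1 (by positivity)
      calc |(1 + w / z).arg| ≤ π / 2 * ((4:ℝ)/3) * ‖1 + w / z - 1‖ := h1
        _ ≤ π / 2 * ((4:ℝ)/3) * (1/8) := h2
        _ = π / 12 := by ring
    have hargb : |b.arg| ≤ π / 6 := by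
      have h1 := aux_arg_near_one hb14
      have h2 : π / 2 * ((4:ℝ)/3) * ‖b - 1‖ ≤ π / 2 * ((4:ℝ)/3) * (1/4) :=
        mul_le_mul_of_nonneg_left hb14 (by positivity)
      calc |b.arg| ≤ π / 2 * ((4:ℝ)/3) * ‖b - 1‖ := h1
        _ ≤ π / 2 * ((4:ℝ)/3) * (1/4) := h2
        _ = π / 6 := by ring
    have hzc : z + w = z * (1 + w / z) := by field_simp
    have hargsum1 : z.arg + (1 + w / z).arg ∈ Set.Ioc (-π) π := by
      have h1 := abs_le.mp harg_z
      have h2 := abs_le.mp hargc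
      constructor
      · linarith [h1.1, h2.1]
      · linarith [h1.2, h2.2]
    have harga_eq : (z + w).arg = z.arg + (1 + w / z).arg := by
      rw [hzc]; exact Complex.arg_mul hzne hcne hargsum1
    have harga : |(z + w).arg| ≤ 3 * π / 5 + π / 12 := by
      rw [harga_eq]
      calc |z.arg + (1 + w / z).arg| ≤ |z.arg| + |(1 + w / z).arg| := abs_add_le _ _
        _ ≤ 3 * π / 5 + π / 12 := add_le_add harg_z hargc
    have hargsum2 : (z + w).arg + b.arg ∈ Set.Ioc (-π) π := by
      have h1 := abs_le.mp harga
      have h2 := abs_le.mp hargb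
      constructor
      · linarith [h1.1, h2.1]
      · linarith [h1.2, h2.2]
    have hlog : Complex.log ((z + w) * b) = Complex.log (z + w) + Complex.log b :=
      Complex.log_mul hane hbne hargsum2
    have hcpow1 : (z + w) ^ (γ:ℂ) = Complex.exp (Complex.log (z + w) * γ) :=
      Complex.cpow_def_of_ne_zero hane _
    have habne : (z + w) * b ≠ 0 := mul_ne_zero hane hbne
    have hcpow2 : ((z + w) * b) ^ (γ:ℂ)
        = Complex.exp (Complex.log (z + w) * γ) * Complex.exp (Complex.log b * γ) := by
      rw [Complex.cpow_def_of_ne_zero habne, hlog, add_mul, Complex.exp_add]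
    have hdiff : (z + w) ^ (γ:ℂ) - ((z + w) * b) ^ (γ:ℂ)
        = Complex.exp (Complex.log (z + w) * γ) * (1 - Complex.exp (Complex.log b * γ)) := by
      rw [hcpow1, hcpow2]; ring
    rw [hdiff, norm_mul]
    have ht1 : ‖Complex.exp (Complex.log (z + w) * γ)‖
        = ‖z + w‖ ^ γ := by
      rw [Complex.norm_exp, Real.rpow_def_of_pos (norm_pos_iff.mpr hane)]
      congr 1
      simp [Complex.mul_re, Complex.log_re, Complex.log_im]
    have hlogb : ‖Complex.log b‖ ≤ 5 * ‖b - 1‖ := aux_log_near_one hb14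
    have hlogbγ : ‖Complex.log b * γ‖ ≤ 5 * |γ| * ‖b - 1‖ := by
      rw [norm_mul, Complex.norm_real, Real.norm_eq_abs]
      have := mul_le_mul_of_nonneg_right hlogb (abs_nonneg γ)
      linarith
    have hsmall1 : ‖Complex.log b * γ‖ ≤ 1 := by
      have h1 : 5 * |γ| * ‖b - 1‖ ≤ 5 * |γ| * (9/8 * δ) :=
        mul_le_mul_of_nonneg_left (hb1.trans habsu1) (by positivity)
      have h2 : (0:ℝ) ≤ |γ| * δ := mul_nonneg (abs_nonneg γ) hδ0.le
      nlinarith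
    have ht2 : ‖1 - Complex.exp (Complex.log b * γ)‖
        ≤ 10 * |γ| * ‖b - 1‖ := by
      have h8 := Complex.norm_exp_sub_one_le hsmall1
      calc ‖1 - Complex.exp (Complex.log b * γ)‖
          = ‖Complex.exp (Complex.log b * γ) - 1‖ := by
            rw [← norm_neg (1 - Complex.exp (Complex.log b * γ))]; ring_nf
        _ ≤ 2 * ‖Complex.log b * γ‖ := h8
        _ ≤ 10 * |γ| * ‖b - 1‖ := by linarith
    have hbu : ‖b - 1‖ ≤ τ * (9/8 * ‖z‖) := by
      have h1 : ‖u‖ ≤ τ * (9/8 * ‖z‖) := by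
        rw [habsu]
        exact mul_le_mul_of_nonneg_left haA2 hτ0.le
      linarith
    calc ‖Complex.exp (Complex.log (z + w) * γ)‖
          * ‖1 - Complex.exp (Complex.log b * γ)‖
        = ‖z + w‖ ^ γ * ‖1 - Complex.exp (Complex.log b * γ)‖ := by
          rw [ht1]
      _ ≤ (2 ^ |γ| * ‖z‖ ^ γ) * (10 * |γ| * ‖b - 1‖) := by
          apply mul_le_mul hrpow_a ht2 (norm_nonneg _)
          positivity
      _ ≤ (2 ^ |γ| * ‖z‖ ^ γ) * (12 * (|γ| + 1) * (τ * ‖z‖)) := by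
          apply mul_le_mul_of_nonneg_left _ (by positivity)
          have h1 : 10 * |γ| * ‖b - 1‖ ≤ 10 * |γ| * (τ * (9/8 * ‖z‖)) :=
            mul_le_mul_of_nonneg_left hbu (by positivity)
          have h2 : (0:ℝ) ≤ τ * ‖z‖ := by positivity
          nlinarith [mul_nonneg (abs_nonneg γ) h2]
      _ = 12 * 2 ^ |γ| * (|γ| + 1) * τ * (‖z‖ ^ γ * ‖z‖) := by ring
      _ ≤ C * τ * (‖z‖ ^ γ * ‖z‖) := by
          apply mul_le_mul_of_nonneg_right _ (by positivity)
          exact mul_le_mul_of_nonneg_right hC1 hτ0.le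
      _ = C * τ * ‖z‖ ^ (γ + 1) := by rw [hA1]
  · -- LARGE CASE
    obtain ⟨hray1, hray2⟩ : ‖z‖ ≤ π / (τ * Real.sin (3 * π / 5))
        ∧ |z.arg| = 3 * π / 5 := by
      rcases hz with ⟨_, h1, h2⟩ | ⟨h1, _⟩
      · exact ⟨h1, h2⟩
      · exfalso; rw [h1] at hlarge; linarith [hτκ, hδ0]
    have hsin0 : (0:ℝ) < Real.sin (3 * π / 5) := by linarith
    have hzim : τ * |z.im| ≤ π := by
      have h1 : ‖z‖ * (τ * Real.sin (3 * π / 5)) ≤ π :=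
        (le_div_iff₀ (mul_pos hτ0 hsin0)).mp hray1
      have h2 : |z.im| = ‖z‖ * Real.sin (3 * π / 5) := by
        rw [← Complex.norm_mul_sin_arg z, abs_mul,
          _root_.abs_of_nonneg (norm_nonneg z)]
        rcases abs_eq (by positivity : (0:ℝ) ≤ 3 * π / 5) |>.mp hray2 with h | h
        · rw [h, _root_.abs_of_nonneg hsin0.le]
        · rw [h, Real.sin_neg, abs_neg, _root_.abs_of_nonneg hsin0.le]
      rw [h2]
      linarith
    have huim : |u.im| ≤ 3 * π / 2 := by
      have h1 : u.im = τ * (z.im + w.im) := by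
        rw [hudef]
        simp [Complex.mul_im]
      have h2 : |w.im| ≤ L := le_trans (Complex.abs_im_le_norm w) hw
      have h3 : |u.im| ≤ τ * |z.im| + τ * L := by
        rw [h1, mul_add]
        calc |τ * z.im + τ * w.im| ≤ |τ * z.im| + |τ * w.im| := abs_add_le _ _
          _ = τ * |z.im| + τ * |w.im| := by
              rw [abs_mul, abs_mul, _root_.abs_of_pos hτ0]
          _ ≤ τ * |z.im| + τ * L := by
              have := mul_le_mul_of_nonneg_left h2 hτ0.le
              linarith
      have hpi3 : (3:ℝ) < π := Real.pi_gt_three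
      linarith [hτL, hδ8]
    have hulb : δ / 2 ≤ ‖u‖ := by
      rw [habsu]
      have h1 : τ * (7/8 * ‖z‖) ≤ τ * ‖z + w‖ :=
        mul_le_mul_of_nonneg_left haA1 hτ0.le
      nlinarith
    have hlb := aux_exp_lb (show (0:ℝ) < δ/2 by positivity) (by linarith) hulb huim
    have huub : ‖u‖ ≤ 5 := by
      rw [habsu]
      have h1 : τ * ‖z + w‖ ≤ τ * (9/8 * ‖z‖) :=
        mul_le_mul_of_nonneg_left haA2 hτ0.le
      nlinarith
    have hupos : 0 < ‖u‖ := norm_pos_iff.mpr hune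
    have hnum_ub : ‖1 - Complex.exp (-u)‖ ≤ 1 + Real.exp 5 := by
      have h1 : ‖Complex.exp (-u)‖ ≤ Real.exp 5 := by
        rw [Complex.norm_exp]
        apply Real.exp_le_exp.mpr
        have := abs_le.mp (le_trans (Complex.abs_re_le_norm u) huub : |u.re| ≤ 5)
        simp only [Complex.neg_re]
        linarith [this.1]
      calc ‖1 - Complex.exp (-u)‖
          ≤ ‖(1:ℂ)‖ + ‖Complex.exp (-u)‖ := by
            have h2 := norm_sub_le (1 : ℂ) (Complex.exp (-u))
            simpa using h2
        _ ≤ 1 + Real.exp 5 := by simp only [norm_one]; linarith [h1]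
    have hbub : ‖b‖ ≤ 2 * (1 + Real.exp 5) / δ := by
      rw [hbdef, norm_div, div_le_div_iff₀ hupos hδ0]
      have p1 : ‖1 - Complex.exp (-u)‖ * δ ≤ (1 + Real.exp 5) * δ :=
        mul_le_mul_of_nonneg_right hnum_ub hδ0.le
      have p2 : 2 * (1 + Real.exp 5) * (δ/2) ≤ 2 * (1 + Real.exp 5) * ‖u‖ :=
        mul_le_mul_of_nonneg_left hulb (by positivity)
      nlinarith [Real.exp_pos 5]
    have hblb : δ / 80 ≤ ‖b‖ := by
      rw [hbdef, norm_div, le_div_iff₀ hupos]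
      calc δ / 80 * ‖u‖ ≤ δ / 80 * 5 :=
            mul_le_mul_of_nonneg_left huub (by positivity)
        _ = δ / 2 / 8 := by ring
        _ ≤ ‖1 - Complex.exp (-u)‖ := hlb
    have hKbound : (‖b‖) ^ γ ≤ K := hKb _ hblb hbub
    have htri : ‖(z + w) ^ (γ:ℂ) - ((z + w) * b) ^ (γ:ℂ)‖
        ≤ ‖(z + w) ^ (γ:ℂ)‖ + ‖((z + w) * b) ^ (γ:ℂ)‖ := by
      have := norm_sub_le ((z + w) ^ (γ:ℂ)) (((z + w) * b) ^ (γ:ℂ))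
      simpa using this
    calc ‖(z + w) ^ (γ:ℂ) - ((z + w) * b) ^ (γ:ℂ)‖
        ≤ ‖(z + w) ^ (γ:ℂ)‖ + ‖((z + w) * b) ^ (γ:ℂ)‖ := htri
      _ = ‖z + w‖ ^ γ + (‖z + w‖ * ‖b‖) ^ γ := by
          rw [Complex.norm_cpow_real, Complex.norm_cpow_real, norm_mul]
      _ = ‖z + w‖ ^ γ + ‖z + w‖ ^ γ * (‖b‖) ^ γ := by
          rw [Real.mul_rpow (norm_nonneg _) (norm_nonneg _)]
      _ ≤ 2 ^ |γ| * ‖z‖ ^ γ + 2 ^ |γ| * ‖z‖ ^ γ * K := by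
          apply add_le_add hrpow_a
          apply mul_le_mul hrpow_a hKbound (Real.rpow_nonneg (norm_nonneg _) γ)
          positivity
      _ = 2 ^ |γ| * (1 + K) * ‖z‖ ^ γ := by ring
      _ ≤ 2 ^ |γ| * (1 + K) * (τ * ‖z‖ / δ * ‖z‖ ^ γ) := by
          apply mul_le_mul_of_nonneg_left _ (by positivity)
          have h9 : (1:ℝ) ≤ τ * ‖z‖ / δ := by
            rw [le_div_iff₀ hδ0]; linarith
          nlinarith [Real.rpow_nonneg (norm_nonneg z) γ]
      _ = 2 ^ |γ| * (1 + K) / δ * τ * (‖z‖ ^ γ * ‖z‖) := by ring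
      _ ≤ C * τ * (‖z‖ ^ γ * ‖z‖) := by
          apply mul_le_mul_of_nonneg_right _ (by positivity)
          exact mul_le_mul_of_nonneg_right hC2 hτ0.le
      _ = C * τ * ‖z‖ ^ (γ + 1) := by rw [hA1]
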